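/- Suppose |V_c| = 1 for every prompt c and let C := min_c |E_c| + 1. Then the expected false positive rate over a uniformly random threshold satisfies Pr_{t∼Unif[0,1], (c,r)∼D}[f̂_t(c,r) = + and f(c,r) = −] ≤ err/(2(C−1)). -/

import Mathlib

open Finset

open scoped Classical

lemma aux_eq_ind (p K : ℝ) :
    (fun t => if p > t then K else 0) = (Set.Iio p).indicator (fun _ => K) := by
  ext t
  by_cases h : t < p <;> simp [Set.indicator, h]

lemma aux_intble (p K : ℝ) :
    IntervalIntegrable (fun t => if p > t then K else 0) MeasureTheory.volume 0 1 := by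
  rw [aux_eq_ind, intervalIntegrable_iff]
  refine ((MeasureTheory.integrableOn_const_iff enorm_ne_top).mpr (Or.inr ?_)).indicator measurableSet_Iio
  simp [Set.uIoc_of_le (zero_le_one (α := ℝ))]

lemma aux_int (p K : ℝ) (hp0 : 0 ≤ p) (hp1 : p ≤ 1) :
    ∫ t in (0:ℝ)..1, (if p > t then K else 0) = K * p := by
  rw [aux_eq_ind, intervalIntegral.integral_of_le zero_le_one,
    MeasureTheory.setIntegral_indicator measurableSet_Iio]
  have h : Set.Ioc 0 1 ∩ Set.Iio p = Set.Ioo 0 p := by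
    ext t
    constructor
    · rintro ⟨⟨h2, h3⟩, h1⟩; exact ⟨h2, h1⟩
    · rintro ⟨h1, h2⟩; exact ⟨⟨h1, le_trans h2.le hp1⟩, h2⟩
  rw [h, MeasureTheory.setIntegral_const]
  simp [Real.volume_Ioo, ENNReal.toReal_ofReal hp0, mul_comm]
  rw [max_eq_left hp0, mul_comm]

set_option maxHeartbeats 1000000 in
theorem stmt7 {C R : Type} [Fintype C] [Nonempty C] [Fintype R]
    (μ : C → ℝ) (hμ0 : ∀ c, 0 ≤ μ c) (hμ1 : ∑ c, μ c = 1)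
    (Rset : C → Finset R) (a : C → R)
    (ha : ∀ c, a c ∈ Rset c)
    (hEne : ∀ c, (Rset c \ {a c}).Nonempty)
    (phat : C → R → ℝ)
    (hphat0 : ∀ c r, 0 ≤ phat c r)
    (hphat1 : ∀ c, ∑ r ∈ Rset c, phat c r = 1)
    (hphatsupp : ∀ c, ∀ r ∉ Rset c, phat c r = 0) :
    -- number of choices C = min_c |E_c| + 1
    let Cnum : ℕ := (Finset.univ.inf' Finset.univ_nonempty
      (fun c => (Rset c \ {a c}).card)) + 1
    -- D: with prob 1/2 draw c ∼ μ and r = a_c; with prob 1/2 draw c ∼ μ and r uniform in E_c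
    let D : C → R → ℝ := fun c r => (if r = a c then μ c / 2 else 0) +
      (if r ∈ Rset c \ {a c} then μ c / (2 * ((Rset c \ {a c}).card : ℝ)) else 0)
    -- false positive probability at threshold t: f̂_t(c,r) = + and f(c,r) = −
    let FP : ℝ → ℝ := fun t => ∑ c, ∑ r ∈ Rset c,
      if phat c r > t ∧ r ≠ a c then D c r else 0
    -- generative error rate
    let err : ℝ := ∑ c, μ c * ∑ r ∈ Rset c \ {a c}, phat c r
    (∫ t in (0:ℝ)..1, FP t) ≤ err / (2 * ((Cnum : ℝ) - 1)) := by
  intro Cnum D FP err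
  set m : ℕ := Finset.univ.inf' Finset.univ_nonempty
      (fun c => (Rset c \ {a c}).card) with hm
  have hm1 : 1 ≤ m := by
    apply Finset.le_inf'
    intro c _
    exact Finset.card_pos.mpr (hEne c)
  have hmle : ∀ c : C, m ≤ (Rset c \ {a c}).card := fun c =>
    Finset.inf'_le _ (Finset.mem_univ c)
  -- bounds on phat
  have hple : ∀ c, ∀ r ∈ Rset c, phat c r ≤ 1 := by
    intro c r hr
    rw [← hphat1 c]
    exact Finset.single_le_sum (fun r _ => hphat0 c r) hr
  -- rewrite each indicator
  have hterm : ∀ (c : C) (r : R) (t : ℝ),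
      (if phat c r > t ∧ r ≠ a c then D c r else 0) =
      (if phat c r > t then (if r = a c then 0 else D c r) else 0) := by
    intro c r t
    by_cases h : r = a c <;> simp [h]
  have hFPval : (∫ t in (0:ℝ)..1, FP t) =
      ∑ c, ∑ r ∈ Rset c, (if r = a c then 0 else D c r) * phat c r := by
    have : FP = fun t => ∑ c, ∑ r ∈ Rset c,
        (if phat c r > t then (if r = a c then 0 else D c r) else 0) := by
      funext t
      exact Finset.sum_congr rfl fun c _ => Finset.sum_congr rfl fun r _ => hterm c r t
    rw [this]
    beta_reduce
    have hint : ∀ c : C, IntervalIntegrable (fun t => ∑ r ∈ Rset c,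
        if phat c r > t then (if r = a c then 0 else D c r) else 0)
        MeasureTheory.volume 0 1 := by
      intro c
      have heq : (∑ r ∈ Rset c, fun t =>
          if phat c r > t then (if r = a c then 0 else D c r) else 0) =
          (fun t => ∑ r ∈ Rset c,
            if phat c r > t then (if r = a c then 0 else D c r) else 0) := by
        ext t
        simp
      rw [← heq]
      exact IntervalIntegrable.sum _ (fun r _ => aux_intble _ _)
    have h1 : (∫ (t : ℝ) in (0:ℝ)..1, ∑ c : C, ∑ r ∈ Rset c,
          if phat c r > t then (if r = a c then 0 else D c r) else 0) =
        ∑ c : C, ∫ (t : ℝ) in (0:ℝ)..1, ∑ r ∈ Rset c,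
          if phat c r > t then (if r = a c then 0 else D c r) else 0 :=
      intervalIntegral.integral_finset_sum (fun c _ => hint c)
    rw [h1]
    refine Finset.sum_congr rfl fun c _ => ?_
    have h2 : (∫ (t : ℝ) in (0:ℝ)..1, ∑ r ∈ Rset c,
          if phat c r > t then (if r = a c then 0 else D c r) else 0) =
        ∑ r ∈ Rset c, ∫ (t : ℝ) in (0:ℝ)..1,
          if phat c r > t then (if r = a c then 0 else D c r) else 0 :=
      intervalIntegral.integral_finset_sum (fun r _ => aux_intble _ _)
    rw [h2]
    exact Finset.sum_congr rfl fun r hr => aux_int _ _ (hphat0 c r) (hple c r hr)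
  rw [hFPval]
  -- simplify inner sums
  have hsum : ∀ c : C, ∑ r ∈ Rset c, (if r = a c then 0 else D c r) * phat c r =
      (μ c / (2 * ((Rset c \ {a c}).card : ℝ))) * ∑ r ∈ Rset c \ {a c}, phat c r := by
    intro c
    rw [← Finset.sum_subset (Finset.sdiff_subset) (by
      intro r hr hr'
      have : r = a c := by
        by_contra h
        exact hr' (Finset.mem_sdiff.mpr ⟨hr, Finset.notMem_singleton.mpr h⟩)
      simp [this])]
    rw [Finset.mul_sum]
    refine Finset.sum_congr rfl fun r hr => ?_
    have h1 : r ≠ a c := by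
      have := (Finset.mem_sdiff.mp hr).2
      simpa using this
    simp only [D, h1, if_false, hr, if_true, zero_add, if_neg h1]
  rw [Finset.sum_congr rfl fun c _ => hsum c]
  have hC : ((Cnum : ℝ) - 1) = (m : ℝ) := by
    have h' : Cnum = m + 1 := rfl
    rw [h']
    push_cast
    ring
  have hm0 : (0:ℝ) < (m : ℝ) := by exact_mod_cast hm1
  rw [hC]
  show _ ≤ (∑ c, μ c * ∑ r ∈ Rset c \ {a c}, phat c r) / (2 * (m:ℝ))
  rw [Finset.sum_div]
  refine Finset.sum_le_sum fun c _ => ?_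
  have hS : 0 ≤ ∑ r ∈ Rset c \ {a c}, phat c r :=
    Finset.sum_nonneg fun r _ => hphat0 c r
  have he : (m : ℝ) ≤ ((Rset c \ {a c}).card : ℝ) := by exact_mod_cast hmle c
  have hcard0 : (0:ℝ) < ((Rset c \ {a c}).card : ℝ) := lt_of_lt_of_le hm0 he
  calc μ c / (2 * ((Rset c \ {a c}).card : ℝ)) * ∑ r ∈ Rset c \ {a c}, phat c r
      = (μ c * ∑ r ∈ Rset c \ {a c}, phat c r) / (2 * ((Rset c \ {a c}).card : ℝ)) := by
        ring
    _ ≤ (μ c * ∑ r ∈ Rset c \ {a c}, phat c r) / (2 * (m:ℝ)) := by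
        gcongr
        exact mul_nonneg (hμ0 c) hS
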